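/- Let K be a field equipped with a nonarchimedean multiplicative absolute value, and let L be a finite field extension of K. For x ∈ L, the spectral value of the characteristic polynomial of the K-linear map L → L given by multiplication by x equals the spectral value of the minimal polynomial of x over K (that is, it equals the spectral norm of x). -/

import Mathlib

open Polynomial

/-- The spectral value of a monic polynomial `p(z) = z^n + c_1 z^{n-1} + ⋯ + c_n`
with respect to an absolute value `v`, namely `max_{1 ≤ i ≤ n} v(c_i)^(1/i)`
(the coefficient `c_i` sits in degree `n - i`). -/
noncomputable def spectralVal {L : Type*} [Field L] (v : L → NNReal)
    (p : Polynomial L) : NNReal :=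
  (Finset.range p.natDegree).sup fun j =>
    v (p.coeff j) ^ ((((p.natDegree - j : ℕ) : ℝ))⁻¹)

section Aux

variable {K : Type*} [Field K] {v : K → NNReal}

lemma aux_rpow_inv_pow (x : NNReal) {k : ℕ} (hk : k ≠ 0) :
    (x ^ (((k : ℕ) : ℝ))⁻¹) ^ k = x := by
  rw [← NNReal.rpow_natCast (x ^ (((k : ℕ) : ℝ))⁻¹) k, ← NNReal.rpow_mul,
    inv_mul_cancel₀ (by exact_mod_cast hk), NNReal.rpow_one]

lemma aux_pow_rpow_inv (x : NNReal) {k : ℕ} (hk : k ≠ 0) :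
    (x ^ k) ^ (((k : ℕ) : ℝ))⁻¹ = x := by
  rw [← NNReal.rpow_natCast x k, ← NNReal.rpow_mul,
    mul_inv_cancel₀ (by exact_mod_cast hk), NNReal.rpow_one]

lemma aux_v_zero (hv0 : ∀ a, v a = 0 ↔ a = 0) : v 0 = 0 := (hv0 0).mpr rfl

lemma aux_v_one (hv0 : ∀ a, v a = 0 ↔ a = 0)
    (hvmul : ∀ a b, v (a * b) = v a * v b) : v 1 = 1 := by
  have h := hvmul 1 1
  rw [mul_one] at h
  have h1 : v 1 ≠ 0 := fun h' => one_ne_zero ((hv0 1).mp h')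
  exact (mul_left_cancel₀ h1 (by rw [← h, mul_one])).symm

lemma aux_v_neg (hv0 : ∀ a, v a = 0 ↔ a = 0)
    (hvmul : ∀ a b, v (a * b) = v a * v b) (a : K) : v (-a) = v a := by
  have hm1 : v (-1 : K) = 1 := by
    have h : v (-1 : K) * v (-1 : K) = 1 := by
      rw [← hvmul, neg_one_mul, neg_neg, aux_v_one hv0 hvmul]
    have := NNReal.sqrt_mul_self (v (-1 : K))
    rw [h, NNReal.sqrt_one] at this  -- this : 1 = v (-1)
    exact this.symm
  calc v (-a) = v ((-1) * a) := by rw [neg_one_mul]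
  _ = v (-1 : K) * v a := hvmul _ _
  _ = v a := by rw [hm1, one_mul]

lemma aux_v_sum_le (hv0 : ∀ a, v a = 0 ↔ a = 0)
    (hvadd : ∀ a b, v (a + b) ≤ max (v a) (v b))
    {ι : Type*} (t : Finset ι) (f : ι → K) :
    v (∑ i ∈ t, f i) ≤ t.sup fun i => v (f i) := by
  classical
  induction t using Finset.induction with
  | empty => simp [aux_v_zero hv0]
  | @insert a t ha ih =>
    rw [Finset.sum_insert ha, Finset.sup_insert]
    exact (hvadd _ _).trans (max_le_max le_rfl ih)

lemma aux_v_add_eq (hv0 : ∀ a, v a = 0 ↔ a = 0)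
    (hvmul : ∀ a b, v (a * b) = v a * v b)
    (hvadd : ∀ a b, v (a + b) ≤ max (v a) (v b))
    {a b : K} (h : v b < v a) : v (a + b) = v a := by
  refine le_antisymm ((hvadd a b).trans (by rw [max_eq_left h.le])) ?_
  have h2 : v a ≤ max (v (a + b)) (v b) := by
    have := hvadd (a + b) (-b)
    rw [add_neg_cancel_right, aux_v_neg hv0 hvmul] at this
    exact this
  rcases le_max_iff.mp h2 with h3 | h3
  · exact h3
  · exact absurd h3 (not_le.mpr h)

lemma aux_v_sum_eq (hv0 : ∀ a, v a = 0 ↔ a = 0)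
    (hvmul : ∀ a b, v (a * b) = v a * v b)
    (hvadd : ∀ a b, v (a + b) ≤ max (v a) (v b))
    {ι : Type*} (t : Finset ι) (f : ι → K) {i0 : ι} (h0 : i0 ∈ t)
    (hpos : 0 < v (f i0)) (hlt : ∀ i ∈ t, i ≠ i0 → v (f i) < v (f i0)) :
    v (∑ i ∈ t, f i) = v (f i0) := by
  classical
  rw [← Finset.add_sum_erase t f h0]
  refine aux_v_add_eq hv0 hvmul hvadd ?_
  calc v (∑ i ∈ t.erase i0, f i) ≤ (t.erase i0).sup fun i => v (f i) :=
        aux_v_sum_le hv0 hvadd _ _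
  _ < v (f i0) := by
      rw [Finset.sup_lt_iff (by simpa using hpos)]
      intro i hi
      exact hlt i (Finset.mem_of_mem_erase hi) (Finset.ne_of_mem_erase hi)

/-- The spectral value of a power of a monic polynomial equals the spectral
value of the polynomial, for a nonarchimedean multiplicative absolute value. -/
lemma spectralVal_pow (hv0 : ∀ a, v a = 0 ↔ a = 0)
    (hvmul : ∀ a b, v (a * b) = v a * v b)
    (hvadd : ∀ a b, v (a + b) ≤ max (v a) (v b))
    (p : K[X]) (hp : p.Monic) {e : ℕ} (he : e ≠ 0) :
    spectralVal v (p ^ e) = spectralVal v p := by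
  classical
  set n := p.natDegree with hn
  set s := spectralVal v p with hs
  have hs' : s = (Finset.range n).sup
      (fun j => v (p.coeff j) ^ ((((n - j : ℕ) : ℝ))⁻¹)) := rfl
  have hv1 : v 1 = 1 := aux_v_one hv0 hvmul
  have hvz : v 0 = 0 := aux_v_zero hv0
  have hdeg : (p ^ e).natDegree = e * n := by rw [natDegree_pow]
  -- each coefficient is bounded: `v c_j * s^j ≤ s^n`
  have hA1 : ∀ j, v (p.coeff j) * s ^ j ≤ s ^ n := by
    intro j
    rcases lt_trichotomy j n with hj | hj | hj
    · have h1 : v (p.coeff j) ^ ((((n - j : ℕ) : ℝ))⁻¹) ≤ s := by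
        rw [hs']
        exact Finset.le_sup (f := fun j => v (p.coeff j) ^ ((((n - j : ℕ) : ℝ))⁻¹))
          (Finset.mem_range.mpr hj)
      have h2 : v (p.coeff j) ≤ s ^ (n - j) := by
        have := pow_le_pow_left₀ zero_le' h1 (n - j)
        rwa [aux_rpow_inv_pow _ (Nat.sub_ne_zero_of_lt hj)] at this
      calc v (p.coeff j) * s ^ j ≤ s ^ (n - j) * s ^ j :=
            mul_le_mul_left h2 _
      _ = s ^ n := by rw [← pow_add, Nat.sub_add_cancel hj.le]
    · subst hj
      rw [hp.coeff_natDegree, hv1, one_mul]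
    · rw [coeff_eq_zero_of_natDegree_lt hj, hvz, zero_mul]
      exact zero_le'
  -- upper bound for powers
  have hU : ∀ m j, v ((p ^ m).coeff j) * s ^ j ≤ s ^ (m * n) := by
    intro m
    induction m with
    | zero =>
      intro j
      rw [pow_zero, coeff_one]
      rcases eq_or_ne j 0 with rfl | hj
      · simp [hv1]
      · simp [hj, hvz]
    | succ m ih =>
      intro j
      rw [pow_succ, coeff_mul]
      calc v (∑ x ∈ Finset.HasAntidiagonal.antidiagonal j, (p ^ m).coeff x.1 * p.coeff x.2) * s ^ j
          ≤ ((Finset.HasAntidiagonal.antidiagonal j).sup fun x =>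
              v ((p ^ m).coeff x.1 * p.coeff x.2)) * s ^ j :=
            mul_le_mul_left (aux_v_sum_le hv0 hvadd _ _) _
      _ = (Finset.HasAntidiagonal.antidiagonal j).sup
            (fun x => v ((p ^ m).coeff x.1 * p.coeff x.2) * s ^ j) :=
            NNReal.finset_sup_mul _ _ _
      _ ≤ s ^ ((m + 1) * n) := by
            refine Finset.sup_le fun x hx => ?_
            obtain ⟨a, b⟩ := x
            have hab : a + b = j := Finset.HasAntidiagonal.mem_antidiagonal.mp hx
            rw [hvmul]
            have hsplit : v ((p ^ m).coeff a) * v (p.coeff b) * s ^ j =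
                (v ((p ^ m).coeff a) * s ^ a) * (v (p.coeff b) * s ^ b) := by
              rw [← hab, pow_add]; ring
            rw [hsplit]
            calc (v ((p ^ m).coeff a) * s ^ a) * (v (p.coeff b) * s ^ b)
                ≤ s ^ (m * n) * s ^ n := mul_le_mul' (ih a) (hA1 b)
            _ = s ^ ((m + 1) * n) := by rw [← pow_add, Nat.succ_mul]
  by_cases hs0 : s = 0
  · -- degenerate case: `p = X ^ n`
    have hcz : ∀ j, j < n → p.coeff j = 0 := by
      intro j hj
      have h1 : v (p.coeff j) ^ ((((n - j : ℕ) : ℝ))⁻¹) ≤ s := by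
        rw [hs']
        exact Finset.le_sup (f := fun j => v (p.coeff j) ^ ((((n - j : ℕ) : ℝ))⁻¹))
          (Finset.mem_range.mpr hj)
      rw [hs0, le_zero_iff] at h1
      have h2 : v (p.coeff j) = 0 := by
        have hne : ((((n - j : ℕ) : ℝ))⁻¹) ≠ 0 := by
          simp [Nat.sub_ne_zero_of_lt hj]
        exact ((NNReal.rpow_eq_zero_iff).mp h1).1
      exact (hv0 _).mp h2
    have hpX : p = X ^ n := by
      ext j
      rcases lt_trichotomy j n with hj | hj | hj
      · rw [hcz j hj, coeff_X_pow, if_neg hj.ne]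
      · subst hj; rw [hp.coeff_natDegree, coeff_X_pow, if_pos rfl]
      · rw [coeff_eq_zero_of_natDegree_lt hj, coeff_X_pow, if_neg hj.ne']
    rw [hs0]
    refine le_antisymm ?_ zero_le'
    unfold spectralVal
    refine Finset.sup_le fun j hj => ?_
    rw [Finset.mem_range] at hj
    have hjlt : j < e * n := hdeg ▸ hj
    have hcoeff : (p ^ e).coeff j = 0 := by
      rw [hpX, ← pow_mul, coeff_X_pow]
      exact if_neg (by rw [Nat.mul_comm n e]; exact hjlt.ne)
    rw [hcoeff, hvz, NNReal.zero_rpow]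
    have : (p ^ e).natDegree - j ≠ 0 := Nat.sub_ne_zero_of_lt hj
    simpa using this
  · -- main case: `s ≠ 0`
    have hn0 : n ≠ 0 := by
      intro h
      apply hs0
      rw [hs', h]
      simp
    obtain ⟨j0, hj0mem, hj0⟩ := Finset.exists_mem_eq_sup (Finset.range n)
      ⟨0, Finset.mem_range.mpr (Nat.pos_of_ne_zero hn0)⟩
      (fun j => v (p.coeff j) ^ ((((n - j : ℕ) : ℝ))⁻¹))
    rw [← hs'] at hj0
    have hj0lt : j0 < n := Finset.mem_range.mp hj0mem
    have hcj0 : v (p.coeff j0) = s ^ (n - j0) := by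
      have := congrArg (· ^ (n - j0)) hj0
      try simp only at this
      rw [aux_rpow_inv_pow _ (Nat.sub_ne_zero_of_lt hj0lt)] at this
      exact this.symm
    have hQj0 : v (p.coeff j0) * s ^ j0 = s ^ n := by
      rw [hcj0, ← pow_add, Nat.sub_add_cancel hj0lt.le]
    have hex : ∃ j, v (p.coeff j) * s ^ j = s ^ n := ⟨j0, hQj0⟩
    set m := Nat.find hex with hm
    have hQm : v (p.coeff m) * s ^ m = s ^ n := Nat.find_spec hex
    have hmlt : m < n := lt_of_le_of_lt (Nat.find_le hQj0) hj0lt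
    have hmin : ∀ j, j < m → v (p.coeff j) * s ^ j < s ^ n :=
      fun j hj => lt_of_le_of_ne (hA1 j) (Nat.find_min hex hj)
    have hspos : ∀ k : ℕ, (0 : NNReal) < s ^ k :=
      fun k => pos_iff_ne_zero.mpr (pow_ne_zero _ hs0)
    -- the key lower-bound induction
    have hL : ∀ e', (v ((p ^ e').coeff (e' * m)) * s ^ (e' * m) = s ^ (e' * n)) ∧
        ∀ j, j < e' * m → v ((p ^ e').coeff j) * s ^ j < s ^ (e' * n) := by
      intro e'
      induction e' with
      | zero => constructor <;> simp [hv1]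
      | succ e' ih =>
        have hterm : ∀ (j a b : ℕ), a + b = j → (a, b) ≠ (e' * m, m) →
            j ≤ (e' + 1) * m →
            v ((p ^ e').coeff a * p.coeff b) * s ^ j < s ^ ((e' + 1) * n) := by
          intro j a b hab hne hj
          rw [hvmul]
          have hsplit : v ((p ^ e').coeff a) * v (p.coeff b) * s ^ j =
              (v ((p ^ e').coeff a) * s ^ a) * (v (p.coeff b) * s ^ b) := by
            rw [← hab, pow_add]; ring
          rw [hsplit]
          have hEn : s ^ (e' * n) * s ^ n = s ^ ((e' + 1) * n) := by
            rw [← pow_add, Nat.succ_mul]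
          rcases lt_or_ge b m with hb | hb
          · calc (v ((p ^ e').coeff a) * s ^ a) * (v (p.coeff b) * s ^ b)
                ≤ s ^ (e' * n) * (v (p.coeff b) * s ^ b) :=
                  mul_le_mul_left (hU e' a) _
            _ < s ^ (e' * n) * s ^ n :=
                  mul_lt_mul_of_pos_left (hmin b hb) (hspos _)
            _ = s ^ ((e' + 1) * n) := hEn
          · have ha : a < e' * m := by
              have hsm : (e' + 1) * m = e' * m + m := by ring
              rcases lt_or_ge a (e' * m) with h | h
              · exact h
              · exfalso
                apply hne
                have h2 : a = e' * m ∧ b = m := by omega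
                rw [h2.1, h2.2]
            calc (v ((p ^ e').coeff a) * s ^ a) * (v (p.coeff b) * s ^ b)
                ≤ (v ((p ^ e').coeff a) * s ^ a) * s ^ n :=
                  mul_le_mul_right (hA1 b) _
            _ < s ^ (e' * n) * s ^ n :=
                  mul_lt_mul_of_pos_right (ih.2 a ha) (hspos _)
            _ = s ^ ((e' + 1) * n) := hEn
        have hsm : (e' + 1) * m = e' * m + m := by ring
        have hi0mem : ((e' * m, m) : ℕ × ℕ) ∈ Finset.HasAntidiagonal.antidiagonal ((e' + 1) * m) :=
          Finset.HasAntidiagonal.mem_antidiagonal.mpr hsm.symm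
        have hval : v ((p ^ e').coeff (e' * m) * p.coeff m) * s ^ ((e' + 1) * m)
            = s ^ ((e' + 1) * n) := by
          rw [hvmul]
          have hsplit : v ((p ^ e').coeff (e' * m)) * v (p.coeff m) * s ^ ((e' + 1) * m)
              = (v ((p ^ e').coeff (e' * m)) * s ^ (e' * m)) * (v (p.coeff m) * s ^ m) := by
            rw [hsm, pow_add]; ring
          rw [hsplit, ih.1, hQm, ← pow_add, ← Nat.succ_mul]
        have hpos0 : 0 < v ((p ^ e').coeff (e' * m) * p.coeff m) := by
          rw [pos_iff_ne_zero]
          intro h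
          rw [h, zero_mul] at hval
          exact pow_ne_zero _ hs0 hval.symm
        constructor
        · rw [pow_succ, coeff_mul]
          have hsum := aux_v_sum_eq hv0 hvmul hvadd
            (Finset.HasAntidiagonal.antidiagonal ((e' + 1) * m))
            (fun x => (p ^ e').coeff x.1 * p.coeff x.2) hi0mem hpos0 ?_
          · rw [hsum]
            exact hval
          · intro x hx hxne
            obtain ⟨a, b⟩ := x
            have hab : a + b = (e' + 1) * m := Finset.HasAntidiagonal.mem_antidiagonal.mp hx
            have hw := hterm ((e' + 1) * m) a b hab hxne le_rfl
            refine lt_of_mul_lt_mul_right ?_ (zero_le' (a := s ^ ((e' + 1) * m)))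
            rw [hval]
            exact hw
        · intro j hj
          rw [pow_succ, coeff_mul]
          calc v (∑ x ∈ Finset.HasAntidiagonal.antidiagonal j, (p ^ e').coeff x.1 * p.coeff x.2) * s ^ j
              ≤ ((Finset.HasAntidiagonal.antidiagonal j).sup fun x =>
                  v ((p ^ e').coeff x.1 * p.coeff x.2)) * s ^ j :=
                mul_le_mul_left (aux_v_sum_le hv0 hvadd _ _) _
          _ = (Finset.HasAntidiagonal.antidiagonal j).sup
                (fun x => v ((p ^ e').coeff x.1 * p.coeff x.2) * s ^ j) :=
                NNReal.finset_sup_mul _ _ _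
          _ < s ^ ((e' + 1) * n) := by
                rw [Finset.sup_lt_iff (by simpa using hspos ((e' + 1) * n))]
                intro x hx
                obtain ⟨a, b⟩ := x
                have hab : a + b = j := Finset.HasAntidiagonal.mem_antidiagonal.mp hx
                refine hterm j a b hab ?_ hj.le
                intro hcontra
                rw [Prod.mk.injEq] at hcontra
                apply absurd hj
                have hsm : (e' + 1) * m = e' * m + m := by ring
                omega
    -- conclude: σ(p^e) = s
    have hLe := (hL e).1
    have hmelt : e * m < e * n := by
      have hepos : 0 < e := Nat.pos_of_ne_zero he
      exact (Nat.mul_lt_mul_left hepos).mpr hmlt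
    have hcoeff : v ((p ^ e).coeff (e * m)) = s ^ (e * n - e * m) := by
      have h2 : s ^ (e * n - e * m) * s ^ (e * m) = s ^ (e * n) := by
        rw [← pow_add, Nat.sub_add_cancel hmelt.le]
      exact mul_right_cancel₀ (pow_ne_zero _ hs0) (hLe.trans h2.symm)
    refine le_antisymm ?_ ?_
    · -- σ(p^e) ≤ s
      unfold spectralVal
      refine Finset.sup_le fun j hj => ?_
      rw [Finset.mem_range, hdeg] at hj
      have h1 : v ((p ^ e).coeff j) ≤ s ^ (e * n - j) := by
        have h2 : s ^ (e * n - j) * s ^ j = s ^ (e * n) := by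
          rw [← pow_add, Nat.sub_add_cancel hj.le]
        have h3 := hU e j
        rw [← h2] at h3
        exact le_of_mul_le_mul_right h3 (hspos j)
      calc v ((p ^ e).coeff j) ^ (((((p ^ e).natDegree - j : ℕ)) : ℝ))⁻¹
          ≤ (s ^ (e * n - j)) ^ (((((p ^ e).natDegree - j : ℕ)) : ℝ))⁻¹ :=
            NNReal.rpow_le_rpow h1 (by positivity)
      _ = s := by
            rw [hdeg]
            exact aux_pow_rpow_inv s (Nat.sub_ne_zero_of_lt hj)
    · -- s ≤ σ(p^e)
      have hmem : e * m ∈ Finset.range ((p ^ e).natDegree) := by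
        rw [Finset.mem_range, hdeg]; exact hmelt
      have hle := Finset.le_sup (f := fun j =>
        v ((p ^ e).coeff j) ^ (((((p ^ e).natDegree - j : ℕ)) : ℝ))⁻¹) hmem
      have heq : v ((p ^ e).coeff (e * m))
          ^ (((((p ^ e).natDegree - e * m : ℕ)) : ℝ))⁻¹ = s := by
        rw [hcoeff, hdeg]
        exact aux_pow_rpow_inv s (Nat.sub_ne_zero_of_lt hmelt)
      rw [← heq]
      exact hle

end Aux

lemma aux_charpoly_blockDiagonal {R : Type*} [CommRing R] {n o : Type*}
    [DecidableEq n] [Fintype n] [DecidableEq o] [Fintype o]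
    (M : o → Matrix n n R) :
    (Matrix.blockDiagonal M).charpoly = ∏ k, (M k).charpoly := by
  unfold Matrix.charpoly
  rw [← Matrix.det_blockDiagonal]
  congr 1
  ext ⟨i, k⟩ ⟨j, k'⟩
  rcases eq_or_ne k k' with rfl | hk
  · rcases eq_or_ne i j with rfl | hij
    · rw [Matrix.charmatrix_apply_eq, Matrix.blockDiagonal_apply_eq,
        Matrix.blockDiagonal_apply_eq, Matrix.charmatrix_apply_eq]
    · have h : ((i, k) : n × o) ≠ (j, k) := by simp [hij]
      rw [Matrix.charmatrix_apply_ne _ _ _ h, Matrix.blockDiagonal_apply_eq,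
        Matrix.blockDiagonal_apply_eq, Matrix.charmatrix_apply_ne _ _ _ hij]
  · have h : ((i, k) : n × o) ≠ (j, k') := by simp [hk]
    rw [Matrix.charmatrix_apply_ne _ _ _ h, Matrix.blockDiagonal_apply_ne _ _ _ hk,
      Matrix.blockDiagonal_apply_ne _ _ _ hk]
    simp

open IntermediateField Module in
lemma aux_charpoly_mulLeft (K L : Type*) [Field K] [Field L] [Algebra K L]
    [FiniteDimensional K L] (x : L) :
    LinearMap.charpoly (LinearMap.mulLeft K x)
      = (minpoly K x) ^ (finrank K⟮x⟯ L) := by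
  classical
  have hx : IsIntegral K x := IsIntegral.of_finite K x
  let pb : PowerBasis K K⟮x⟯ := IntermediateField.adjoin.powerBasis hx
  let c : Basis (Fin (finrank K⟮x⟯ L)) K⟮x⟯ L := finBasis K⟮x⟯ L
  let B := pb.basis.smulTower c
  have h1 : (LinearMap.toMatrix B B (LinearMap.mulLeft K x)).charpoly
      = LinearMap.charpoly (LinearMap.mulLeft K x) :=
    LinearMap.charpoly_toMatrix _ B
  rw [← h1]
  have h2 : LinearMap.toMatrix B B (LinearMap.mulLeft K x)
      = Algebra.leftMulMatrix B x := by
    ext i j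
    rw [LinearMap.toMatrix_apply, Algebra.leftMulMatrix_apply,
      LinearMap.toMatrix_apply]
    simp
  have h3 : Algebra.leftMulMatrix B x
      = Matrix.blockDiagonal (fun _ : Fin (finrank K⟮x⟯ L) =>
          Algebra.leftMulMatrix pb.basis pb.gen) := by
    have h4 := Algebra.smulTower_leftMulMatrix_algebraMap pb.basis c pb.gen
    have h5 : algebraMap (↥K⟮x⟯) L pb.gen = x :=
      IntermediateField.AdjoinSimple.algebraMap_gen K x
    rw [h5] at h4
    exact h4
  have h6 : minpoly K pb.gen = minpoly K x := by
    have : pb.gen = AdjoinSimple.gen K x := rfl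
    rw [this, IntermediateField.minpoly_gen]
  rw [h2, h3, aux_charpoly_blockDiagonal, charpoly_leftMulMatrix pb, h6,
    Finset.prod_const, Finset.card_univ, Fintype.card_fin]

/-- For a finite field extension `L/K` of a nonarchimedean valued field and
`x ∈ L`, the spectral value of the characteristic polynomial of multiplication
by `x` equals the spectral value of the minimal polynomial of `x` over `K`
(i.e., the spectral norm of `x`). -/
theorem spectralVal_charpoly_eq_spectralVal_minpoly (K L : Type*) [Field K]
    [Field L] [Algebra K L] [FiniteDimensional K L] (v : K → NNReal)
    (hv0 : ∀ a, v a = 0 ↔ a = 0)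
    (hvmul : ∀ a b, v (a * b) = v a * v b)
    (hvadd : ∀ a b, v (a + b) ≤ max (v a) (v b)) (x : L) :
    spectralVal v (LinearMap.charpoly (LinearMap.mulLeft K x)) =
      spectralVal v (minpoly K x) := by
  have hx : IsIntegral K x := IsIntegral.of_finite K x
  rw [aux_charpoly_mulLeft K L x]
  exact spectralVal_pow hv0 hvmul hvadd (minpoly K x) (minpoly.monic hx)
    (Module.finrank_pos (R := ↥(IntermediateField.adjoin K {x})) (M := L)).ne'
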